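/- Let q ≥ 3 be prime and G = Z/2 * Z/q the free product with S of order 2 and R of order q. Then the only normal subgroups of finite index in G that contain a nontrivial torsion element are G itself, the normal closure of R (index 2), and the normal closure of S (index q). -/

import Mathlib

open Monoid Monoid.CoprodI Monoid.CoprodI.Word

variable {ι : Type*} {M : ι → Type*} [∀ i, Group (M i)] [DecidableEq ι] [∀ i, DecidableEq (M i)]

theorem smul_append (w₁ w₂ : Word M)
    (hc : ∀ l₁ ∈ w₁.toList.getLast?, ∀ l₂ ∈ w₂.toList.head?, l₁.1 ≠ l₂.1) :
    (w₁.prod • w₂).toList = w₁.toList ++ w₂.toList := by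
  induction w₁ using Word.consRecOn with
  | empty => simp [Word.prod_empty]
  | cons i m w h1 h2 ih =>
    have hih : (w.prod • w₂).toList = w.toList ++ w₂.toList := by
      apply ih
      intro l₁ hl₁ l₂ hl₂
      apply hc l₁ _ l₂ hl₂
      rcases hw : w.toList with _ | ⟨a, t⟩
      · simp [hw] at hl₁
      · simpa [Word.cons, hw] using hl₁
    have h1' : (w.prod • w₂).fstIdx ≠ some i := by
      rcases hw : w.toList with _ | ⟨a, t⟩
      · have := hc ⟨i, m⟩ (by simp [Word.cons, hw]) -- getLast? of [⟨i,m⟩]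
        simp only [Word.fstIdx, hih, hw, List.nil_append]
        intro hcon
        rcases Option.map_eq_some_iff.1 hcon with ⟨l₂, hl₂, hfst⟩
        exact this l₂ hl₂ hfst.symm
      · intro hcon
        apply h1
        rw [Word.fstIdx, hih, hw] at hcon
        simp only [List.cons_append, List.head?_cons, Option.map_some] at hcon
        rw [Word.fstIdx, hw]
        simp [hcon]
    rw [Word.prod_cons, mul_smul, ← Word.cons_eq_smul (h1 := h1') (h2 := h2)]
    simp [Word.cons, hih]

theorem pow_smul_empty (w : Word M) (hne : w.toList ≠ [])
    (hij : ∀ l₁ ∈ w.toList.getLast?, ∀ l₂ ∈ w.toList.head?, l₁.1 ≠ l₂.1) (n : ℕ) :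
    ((w.prod ^ (n+1)) • (Word.empty : Word M)).toList.head? = w.toList.head? ∧
      ((w.prod ^ (n+1)) • (Word.empty : Word M)).toList.length = (n+1) * w.toList.length := by
  induction n with
  | zero =>
    have h := smul_append w Word.empty (by simp [Word.empty])
    rw [pow_one]
    refine ⟨?_, ?_⟩ <;> rw [h] <;> simp [Word.empty]
  | succ n ih =>
    have hstep : w.prod ^ (n+1+1) • (Word.empty : Word M)
        = w.prod • (w.prod^(n+1) • Word.empty) := by
      rw [← mul_smul, ← pow_succ']
    rw [hstep]
    have h := smul_append w (w.prod^(n+1) • Word.empty) (by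
      intro l₁ hl₁ l₂ hl₂
      rw [ih.1] at hl₂
      exact hij l₁ hl₁ l₂ hl₂)
    constructor
    · rw [h]
      rcases hw : w.toList with _ | ⟨a, t⟩
      · exact absurd hw hne
      · simp
    · rw [h, List.length_append, ih.2]; ring

theorem not_isOfFinOrder_of_cyc_red (w : Word M) (hne : w.toList ≠ [])
    (hij : ∀ l₁ ∈ w.toList.getLast?, ∀ l₂ ∈ w.toList.head?, l₁.1 ≠ l₂.1) :
    ¬ IsOfFinOrder w.prod := by
  rw [isOfFinOrder_iff_pow_eq_one]
  rintro ⟨n, hn, hpow⟩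
  obtain ⟨m, rfl⟩ : ∃ m, n = m + 1 := ⟨n-1, by omega⟩
  have h := (pow_smul_empty w hne hij m).2
  rw [hpow, one_smul] at h
  simp only [Word.empty, List.length_nil] at h
  have hlen : w.toList.length ≠ 0 := by simpa using hne
  rcases Nat.mul_eq_zero.mp h.symm with h' | h' <;> omega

theorem rcons_length {i : ι} (p : Word.Pair M i) :
    (Word.rcons p).toList.length ≤ p.tail.toList.length + 1 := by
  rw [Word.rcons]; split <;> simp [Word.cons]

theorem smul_length_le (i : ι) (m : M i) (u : Word M) (hu : u.fstIdx = some i) :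
    (CoprodI.of m • u).toList.length ≤ u.toList.length := by
  have hu' : Word.rcons (Word.equivPair i u) = u := by
    rw [← Word.equivPair_symm]; exact (Word.equivPair i).symm_apply_apply u
  have hh : (Word.equivPair i u).head ≠ 1 := by
    intro h
    rw [Word.rcons, dif_pos h] at hu'
    have h2 := (Word.equivPair i u).fstIdx_ne
    rw [hu'] at h2; exact h2 hu
  have hlen : u.toList.length = (Word.equivPair i u).tail.toList.length + 1 := by
    conv_lhs => rw [← hu']
    rw [Word.rcons, dif_neg hh]; simp [Word.cons]
  rw [Word.of_smul_def]
  calc (Word.rcons _).toList.length ≤ _ + 1 := rcons_length _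
  _ = u.toList.length := by rw [hlen]

def invWord (w : Word M) : Word M where
  toList := (w.toList.map fun l => ⟨l.1, l.2⁻¹⟩).reverse
  ne_one := by
    intro l hl
    rw [List.mem_reverse, List.mem_map] at hl
    obtain ⟨a, ha, rfl⟩ := hl
    simpa using w.ne_one a ha
  chain_ne := by
    rw [List.isChain_reverse, List.isChain_map]
    refine w.chain_ne.imp ?_
    intro a b h
    exact Ne.symm h

theorem prod_invWord (w : Word M) : (invWord w).prod = w.prod⁻¹ := by
  rw [Word.prod, Word.prod, List.prod_inv_reverse]
  simp only [invWord, List.map_reverse, List.map_map]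
  rfl

theorem conj_of_isOfFinOrder :
    ∀ (x : CoprodI M), x ≠ 1 → IsOfFinOrder x →
      ∃ (g : CoprodI M) (i : ι) (a : M i), x = g * CoprodI.of a * g⁻¹ := by
  suffices H : ∀ (n : ℕ) (x : CoprodI M), (Word.equiv x).toList.length = n → x ≠ 1 →
      IsOfFinOrder x → ∃ (g : CoprodI M) (i : ι) (a : M i), x = g * CoprodI.of a * g⁻¹ from
    fun x hx hfin => H _ x rfl hx hfin
  intro n
  induction n using Nat.strong_induction_on with
  | _ n ih =>
  intro x hlen hx hfin
  set w := Word.equiv x with hw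
  have hxw : w.prod = x := Word.equiv.symm_apply_apply x
  rcases hlist : w.toList with _ | ⟨⟨i, a⟩, t⟩
  · exfalso
    apply hx
    rw [← hxw, Word.prod, hlist]
    simp
  · have ha1 : a ≠ 1 := w.ne_one ⟨i,a⟩ (by rw [hlist]; exact List.mem_cons_self)
    have hne : w.toList ≠ [] := by rw [hlist]; simp
    by_cases htnil : t = []
    · refine ⟨1, i, a, ?_⟩
      rw [← hxw, Word.prod, hlist, htnil]
      simp
    · by_cases hij : i = (t.getLast htnil).1
      case neg =>
        exfalso
        refine not_isOfFinOrder_of_cyc_red w hne ?_ (hxw ▸ hfin)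
        intro l₁ hl₁ l₂ hl₂
        rw [List.getLast?_eq_getLast_of_ne_nil hne] at hl₁
        rw [hlist, List.head?_cons] at hl₂
        simp only [Option.mem_def, Option.some.injEq] at hl₁ hl₂
        subst hl₁; subst hl₂
        have : w.toList.getLast hne = t.getLast htnil := by
          simp only [hlist]
          exact List.getLast_cons htnil
        rw [this]
        exact fun hcon => hij (hcon.symm)
      case pos =>
        -- cyclic reduction
        have hchain : List.Chain' (fun l l' : (Σ i, M i) => l.1 ≠ l'.1) (⟨i,a⟩ :: t) :=
          hlist ▸ w.chain_ne
        set w' : Word M := ⟨t,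
          fun l hl => w.ne_one l (by rw [hlist]; exact List.mem_cons_of_mem _ hl),
          hchain.tail⟩ with hw'
        have hx_split : x = CoprodI.of a * w'.prod := by
          rw [← hxw, Word.prod, Word.prod, hlist]
          simp
          rfl
        set y := (CoprodI.of a)⁻¹ * x * CoprodI.of a with hy
        have hxy : x = CoprodI.of a * y * (CoprodI.of a)⁻¹ := by rw [hy]; group
        have hyval : y = w'.prod * CoprodI.of a := by rw [hy, hx_split]; group
        have hy1 : y ≠ 1 := by
          intro h
          apply hx
          rw [hxy, h]
          group
        have hyfin : IsOfFinOrder y := by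
          rw [isOfFinOrder_iff_pow_eq_one] at hfin ⊢
          obtain ⟨n0, hn0, hxn⟩ := hfin
          refine ⟨n0, hn0, ?_⟩
          have : y = (CoprodI.of a)⁻¹ * x * ((CoprodI.of a)⁻¹)⁻¹ := by rw [hy, inv_inv]
          rw [this, conj_pow, hxn]
          group
        have hyinv : y⁻¹ = CoprodI.of a⁻¹ * (invWord w').prod := by
          rw [hyval, mul_inv_rev, prod_invWord, map_inv]
        have hfst : (invWord w').fstIdx = some i := by
          show (((t.map fun l => (⟨l.1, l.2⁻¹⟩ : Σ i, M i)).reverse).head?).map Sigma.fst = some i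
          rw [List.head?_reverse, List.getLast?_map,
            List.getLast?_eq_getLast_of_ne_nil htnil]
          simp [hij]
        have hequiv : Word.equiv y⁻¹ = CoprodI.of a⁻¹ • invWord w' := by
          have h0 : Word.equiv y⁻¹ = y⁻¹ • Word.empty := rfl
          rw [h0, hyinv, mul_smul]
          congr 1
          exact Word.equiv.apply_symm_apply (invWord w')
        have hlt : (Word.equiv y⁻¹).toList.length < n := by
          rw [hequiv]
          calc (CoprodI.of a⁻¹ • invWord w').toList.length
              ≤ (invWord w').toList.length := smul_length_le i a⁻¹ _ hfst
            _ = t.length := by simp [invWord]; rfl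
            _ < n := by rw [← hlen, hlist]; simp
        obtain ⟨g, k, c, hc⟩ := ih _ hlt y⁻¹ rfl (inv_ne_one.mpr hy1) hyfin.inv
        refine ⟨CoprodI.of a * g, k, c⁻¹, ?_⟩
        have hyc : y = g * CoprodI.of c⁻¹ * g⁻¹ := by
          rw [← inv_inv y, hc, map_inv]
          group
        rw [hxy, hyc]
        group

section CoprodTransfer

variable {G H : Type} [Group G] [Group H]

private abbrev bfam (G H : Type) [Group G] [Group H] : Bool → Type := fun b => cond b G H

instance : ∀ b, Group (bfam G H b) := fun b => match b with
  | true => ‹Group G›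
  | false => ‹Group H›

private def fwd : Coprod G H →* CoprodI (bfam G H) :=
  Coprod.lift (CoprodI.of (M := bfam G H) (i := true)) (CoprodI.of (M := bfam G H) (i := false))

private def bwd : CoprodI (bfam G H) →* Coprod G H :=
  CoprodI.lift (fun b => match b with
    | true => Coprod.inl
    | false => Coprod.inr)

private theorem bwd_inl (y : G) :
    bwd (CoprodI.of (M := bfam G H) (i := true) y) = Coprod.inl y :=
  CoprodI.lift_of _ _

private theorem bwd_inr (y : H) :
    bwd (CoprodI.of (M := bfam G H) (i := false) y) = Coprod.inr y :=
  CoprodI.lift_of _ _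

private theorem bwd_fwd (x : Coprod G H) : bwd (fwd x) = x := by
  have : (bwd.comp (fwd (G := G) (H := H))) = MonoidHom.id _ := by
    apply Coprod.hom_ext <;> ext x
    · show bwd (fwd (Coprod.inl x)) = Coprod.inl x
      rw [show fwd (Coprod.inl x) = CoprodI.of (M := bfam G H) (i := true) x from
        Coprod.lift_apply_inl _ _ x, bwd_inl]
    · show bwd (fwd (Coprod.inr x)) = Coprod.inr x
      rw [show fwd (Coprod.inr x) = CoprodI.of (M := bfam G H) (i := false) x from
        Coprod.lift_apply_inr _ _ x, bwd_inr]
  exact DFunLike.congr_fun this x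

theorem Coprod.conj_of_isOfFinOrder (x : Coprod G H) (hx : x ≠ 1) (hfin : IsOfFinOrder x) :
    (∃ (g : Coprod G H) (a : G), x = g * Coprod.inl a * g⁻¹) ∨
    (∃ (g : Coprod G H) (b : H), x = g * Coprod.inr b * g⁻¹) := by
  haveI : ∀ i, DecidableEq (bfam G H i) := fun _ => Classical.decEq _
  have hX1 : fwd x ≠ 1 := by
    intro h
    apply hx
    have := bwd_fwd x
    rw [h, map_one] at this
    exact this.symm
  have hXfin : IsOfFinOrder (fwd x) := by
    rw [isOfFinOrder_iff_pow_eq_one] at hfin ⊢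
    obtain ⟨n, hn, hxn⟩ := hfin
    exact ⟨n, hn, by rw [← map_pow fwd x n, hxn]; exact map_one fwd⟩
  obtain ⟨g, i, c, hc⟩ := @_root_.conj_of_isOfFinOrder Bool (bfam G H) _ instDecidableEqBool (fun _ => Classical.decEq _) (fwd x) hX1 hXfin
  have hxeq : x = bwd g * bwd (CoprodI.of c) * (bwd g)⁻¹ := by
    rw [← map_inv, ← map_mul, ← map_mul, ← hc, bwd_fwd]
  cases i with
  | true => exact Or.inl ⟨bwd g, c, by rw [hxeq, bwd_inl]⟩
  | false => exact Or.inr ⟨bwd g, c, by rw [hxeq, bwd_inr]⟩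

end CoprodTransfer

section ZModHelpers

theorem zmod_ne_one_pow_gen {q : ℕ} (hq : q.Prime) (b : Multiplicative (ZMod q)) (hb : b ≠ 1) :
    ∃ m : ℕ, b ^ m = Multiplicative.ofAdd (1 : ZMod q) := by
  haveI := Fact.mk hq
  haveI : NeZero q := ⟨hq.pos.ne'⟩
  set k := Multiplicative.toAdd b with hk
  have hk0 : k ≠ 0 := by
    intro h
    apply hb
    rw [← ofAdd_toAdd b, ← hk, h, ofAdd_zero]
  refine ⟨(k⁻¹).val, ?_⟩
  have hcast : (((k⁻¹).val : ℕ) : ZMod q) = k⁻¹ := ZMod.natCast_rightInverse _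
  apply Multiplicative.toAdd.injective
  rw [toAdd_pow, toAdd_ofAdd, nsmul_eq_mul, hcast, inv_mul_cancel₀ hk0]

theorem zmod_gen_pow {n : ℕ} [NeZero n] (c : Multiplicative (ZMod n)) :
    ∃ m : ℕ, (Multiplicative.ofAdd (1 : ZMod n)) ^ m = c := by
  refine ⟨(Multiplicative.toAdd c).val, ?_⟩
  apply Multiplicative.toAdd.injective
  rw [toAdd_pow, toAdd_ofAdd, nsmul_eq_mul, mul_one]
  exact ZMod.natCast_rightInverse _

theorem zmod_subgroup_eq_top {q : ℕ} (hq : q.Prime) (Hs : Subgroup (Multiplicative (ZMod q)))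
    (b : Multiplicative (ZMod q)) (hbH : b ∈ Hs) (hb : b ≠ 1) : Hs = ⊤ := by
  haveI : NeZero q := ⟨hq.pos.ne'⟩
  ext c
  simp only [Subgroup.mem_top, iff_true]
  obtain ⟨m1, hm1⟩ := zmod_ne_one_pow_gen hq b hb
  obtain ⟨m2, hm2⟩ := zmod_gen_pow (n := q) c
  rw [← hm2, ← hm1]
  exact pow_mem (pow_mem hbH m1) m2

end ZModHelpers

section Kernels

theorem zmod2_ne_one {a : Multiplicative (ZMod 2)} (ha : a ≠ 1) :
    a = Multiplicative.ofAdd (1 : ZMod 2) := by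
  have h2 : Multiplicative.toAdd a ≠ 0 := fun h =>
    ha (by rw [← ofAdd_toAdd a, h, ofAdd_zero])
  have hall : ∀ k : ZMod 2, k ≠ 0 → k = 1 := by decide
  rw [← ofAdd_toAdd a, hall _ h2]

variable (q : ℕ)

theorem ker_liftB [NeZero q] :
    (Coprod.lift (1 : Multiplicative (ZMod 2) →* Multiplicative (ZMod q))
        (MonoidHom.id (Multiplicative (ZMod q)))).ker
      = Subgroup.normalClosure {Coprod.inl (Multiplicative.ofAdd (1 : ZMod 2))} := by
  set nc := Subgroup.normalClosure {(Coprod.inl : Multiplicative (ZMod 2) →* Coprod (Multiplicative (ZMod 2)) (Multiplicative (ZMod q))) (Multiplicative.ofAdd (1 : ZMod 2))} with hnc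
  set φ := Coprod.lift (1 : Multiplicative (ZMod 2) →* Multiplicative (ZMod q))
      (MonoidHom.id (Multiplicative (ZMod q))) with hφ
  have hSin : ∀ a : Multiplicative (ZMod 2), (Coprod.inl : Multiplicative (ZMod 2) →* Coprod (Multiplicative (ZMod 2)) (Multiplicative (ZMod q))) a ∈ nc := by
    intro a
    by_cases ha : a = 1
    · rw [ha, map_one]; exact one_mem _
    · rw [zmod2_ne_one ha]
      exact Subgroup.subset_normalClosure (Set.mem_singleton _)
  apply le_antisymm
  · intro x hx
    have hchi : ((QuotientGroup.mk' nc).comp Coprod.inr).comp φ = QuotientGroup.mk' nc := by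
      apply Coprod.hom_ext
      · refine MonoidHom.ext fun a => ?_
        show (QuotientGroup.mk' nc) (Coprod.inr (φ (Coprod.inl a))) = (QuotientGroup.mk' nc) _
        rw [hφ, Coprod.lift_apply_inl]
        simp only [MonoidHom.one_apply, map_one]
        exact ((QuotientGroup.eq_one_iff _).mpr (hSin a)).symm
      · refine MonoidHom.ext fun b => ?_
        show (QuotientGroup.mk' nc) (Coprod.inr (φ (Coprod.inr b))) = (QuotientGroup.mk' nc) _
        rw [hφ, Coprod.lift_apply_inr]
        rfl
    have hx1 : φ x = 1 := hx
    have := DFunLike.congr_fun hchi x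
    rw [MonoidHom.comp_apply, hx1, map_one] at this
    exact (QuotientGroup.eq_one_iff _).mp this.symm
  · apply Subgroup.normalClosure_le_normal
    rw [Set.singleton_subset_iff]
    show Coprod.inl (Multiplicative.ofAdd (1 : ZMod 2)) ∈ φ.ker
    rw [MonoidHom.mem_ker, hφ, Coprod.lift_apply_inl]
    rfl

theorem ker_liftA [NeZero q] :
    (Coprod.lift (MonoidHom.id (Multiplicative (ZMod 2)))
        (1 : Multiplicative (ZMod q) →* Multiplicative (ZMod 2))).ker
      = Subgroup.normalClosure {Coprod.inr (Multiplicative.ofAdd (1 : ZMod q))} := by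
  set nc := Subgroup.normalClosure {(Coprod.inr : Multiplicative (ZMod q) →* Coprod (Multiplicative (ZMod 2)) (Multiplicative (ZMod q))) (Multiplicative.ofAdd (1 : ZMod q))} with hnc
  set φ := Coprod.lift (MonoidHom.id (Multiplicative (ZMod 2)))
      (1 : Multiplicative (ZMod q) →* Multiplicative (ZMod 2)) with hφ
  have hRin : ∀ b : Multiplicative (ZMod q), (Coprod.inr : Multiplicative (ZMod q) →* Coprod (Multiplicative (ZMod 2)) (Multiplicative (ZMod q))) b ∈ nc := by
    intro b
    obtain ⟨m, hm⟩ := zmod_gen_pow (n := q) b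
    rw [← hm, map_pow (Coprod.inr : Multiplicative (ZMod q) →* Coprod (Multiplicative (ZMod 2)) (Multiplicative (ZMod q))) (Multiplicative.ofAdd (1 : ZMod q)) m]
    exact pow_mem (Subgroup.subset_normalClosure (Set.mem_singleton _)) m
  apply le_antisymm
  · intro x hx
    have hchi : ((QuotientGroup.mk' nc).comp Coprod.inl).comp φ = QuotientGroup.mk' nc := by
      apply Coprod.hom_ext
      · refine MonoidHom.ext fun a => ?_
        show (QuotientGroup.mk' nc) (Coprod.inl (φ (Coprod.inl a))) = (QuotientGroup.mk' nc) _
        rw [hφ, Coprod.lift_apply_inl]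
        rfl
      · refine MonoidHom.ext fun b => ?_
        show (QuotientGroup.mk' nc) (Coprod.inl (φ (Coprod.inr b))) = (QuotientGroup.mk' nc) _
        rw [hφ, Coprod.lift_apply_inr]
        simp only [MonoidHom.one_apply, map_one]
        exact ((QuotientGroup.eq_one_iff _).mpr (hRin b)).symm
    have hx1 : φ x = 1 := hx
    have := DFunLike.congr_fun hchi x
    rw [MonoidHom.comp_apply, hx1, map_one] at this
    exact (QuotientGroup.eq_one_iff _).mp this.symm
  · apply Subgroup.normalClosure_le_normal
    rw [Set.singleton_subset_iff]
    show Coprod.inr (Multiplicative.ofAdd (1 : ZMod q)) ∈ φ.ker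
    rw [MonoidHom.mem_ker, hφ, Coprod.lift_apply_inr]
    rfl

theorem step3 {G' : Type} [Group G'] {p : ℕ} (hp : p.Prime) (φ : G' →* Multiplicative (ZMod p))
    (N : Subgroup G') (hker : φ.ker ≤ N) :
    N = φ.ker ∨ N = ⊤ := by
  by_cases hbot : N.map φ = ⊥
  · left
    refine le_antisymm ?_ hker
    intro x hx
    have hmem : φ x ∈ N.map φ := ⟨x, hx, rfl⟩
    rw [hbot, Subgroup.mem_bot] at hmem
    exact hmem
  · right
    obtain ⟨b, hbmem, hb⟩ : ∃ b ∈ N.map φ, b ≠ 1 := by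
      by_contra h
      push_neg at h
      apply hbot
      rw [eq_bot_iff]
      intro y hy
      rw [Subgroup.mem_bot]
      exact h y hy
    have htop := zmod_subgroup_eq_top hp _ b hbmem hb
    rw [eq_top_iff]
    intro g _
    have hg : φ g ∈ N.map φ := by rw [htop]; trivial
    obtain ⟨m, hmN, hm⟩ := hg
    have hker' : m⁻¹ * g ∈ φ.ker := by
      rw [MonoidHom.mem_ker, map_mul, map_inv, hm]
      group
    have hmul := N.mul_mem hmN (hker hker')
    rwa [mul_inv_cancel_left] at hmul

end Kernels

theorem stmt_11 (q : ℕ) (hq : 3 ≤ q) (hprime : q.Prime)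
    (N : Subgroup (Coprod (Multiplicative (ZMod 2)) (Multiplicative (ZMod q))))
    (hN : N.Normal) (hfi : N.FiniteIndex)
    (htor : ∃ x ∈ N, x ≠ 1 ∧ IsOfFinOrder x) :
    N = ⊤ ∨
    N = Subgroup.normalClosure {Coprod.inr (Multiplicative.ofAdd (1 : ZMod q))} ∨
    N = Subgroup.normalClosure {Coprod.inl (Multiplicative.ofAdd (1 : ZMod 2))} := by
  haveI : NeZero q := ⟨hprime.pos.ne'⟩
  haveI := hN
  obtain ⟨x, hxN, hx1, hxfin⟩ := htor
  rcases Coprod.conj_of_isOfFinOrder x hx1 hxfin with ⟨g, a, hxa⟩ | ⟨g, b, hxb⟩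
  · -- conjugate of inl a
    have ha1 : a ≠ 1 := by
      rintro rfl
      apply hx1
      rw [hxa, map_one]
      group
    rw [zmod2_ne_one ha1] at hxa
    have hSN : Coprod.inl (Multiplicative.ofAdd (1 : ZMod 2)) ∈ N := by
      have h1 : g * Coprod.inl (Multiplicative.ofAdd (1 : ZMod 2)) * g⁻¹ ∈ N := hxa ▸ hxN
      have h2 := hN.conj_mem _ h1 g⁻¹
      have h3 : g⁻¹ * (g * Coprod.inl (Multiplicative.ofAdd (1 : ZMod 2)) * g⁻¹) * g⁻¹⁻¹
          = Coprod.inl (Multiplicative.ofAdd (1 : ZMod 2)) := by group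
      rwa [h3] at h2
    have hncle : Subgroup.normalClosure
        {Coprod.inl (Multiplicative.ofAdd (1 : ZMod 2))} ≤ N :=
      Subgroup.normalClosure_le_normal (by rw [Set.singleton_subset_iff]; exact hSN)
    rcases step3 hprime
        (Coprod.lift (1 : Multiplicative (ZMod 2) →* Multiplicative (ZMod q))
          (MonoidHom.id (Multiplicative (ZMod q)))) N
        (by rw [ker_liftB q]; exact hncle) with h | h
    · right; right; rw [h, ker_liftB q]
    · left; exact h
  · -- conjugate of inr b
    have hb1 : b ≠ 1 := by
      rintro rfl
      apply hx1
      rw [hxb, map_one]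
      group
    have hbN : Coprod.inr b ∈ N := by
      have h1 : g * Coprod.inr b * g⁻¹ ∈ N := hxb ▸ hxN
      have h2 := hN.conj_mem _ h1 g⁻¹
      have h3 : g⁻¹ * (g * Coprod.inr b * g⁻¹) * g⁻¹⁻¹ = Coprod.inr b := by group
      rwa [h3] at h2
    have hRN : Coprod.inr (Multiplicative.ofAdd (1 : ZMod q)) ∈ N := by
      obtain ⟨m, hm⟩ := zmod_ne_one_pow_gen hprime b hb1
      rw [← hm, map_pow (Coprod.inr : Multiplicative (ZMod q) →*
        Coprod (Multiplicative (ZMod 2)) (Multiplicative (ZMod q))) b m]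
      exact pow_mem hbN m
    have hncle : Subgroup.normalClosure
        {Coprod.inr (Multiplicative.ofAdd (1 : ZMod q))} ≤ N :=
      Subgroup.normalClosure_le_normal (by rw [Set.singleton_subset_iff]; exact hRN)
    rcases step3 Nat.prime_two
        (Coprod.lift (MonoidHom.id (Multiplicative (ZMod 2)))
          (1 : Multiplicative (ZMod q) →* Multiplicative (ZMod 2))) N
        (by rw [ker_liftA q]; exact hncle) with h | h
    · right; left; rw [h, ker_liftA q]
    · left; exact h
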